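/- For all positive real numbers ℓ and N and every nonnegative integer n, there exists a real number N* such that: for every positive integer m and every (m,ℓ,N)-nice class F of (0,ℓ]-bounded weighted graphs, the class F^{+n,(0,ℓ]} is an (m,ℓ,N*)-nice class of (0,ℓ]-bounded weighted graphs. -/

import Mathlib

open scoped ENNReal

/-- The length of a walk in an edge-weighted graph: the sum of the weights of its edges. -/
def walkLen {V : Type} {G : SimpleGraph V} (w : Sym2 V → ℝ) {x y : V} (p : G.Walk x y) : ℝ :=
  (p.edges.map w).sum

/-- The distance between two vertices of an edge-weighted graph: the infimum of the lengths
of paths between them (`⊤` if there is no such path). -/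
noncomputable def wDist {V : Type} (G : SimpleGraph V) (w : Sym2 V → ℝ) (x y : V) : ℝ≥0∞ :=
  ⨅ q : {q : G.Walk x y // q.IsPath}, ENNReal.ofReal (walkLen w q.1)

lemma wDist_comm {V : Type} (G : SimpleGraph V) (w : Sym2 V → ℝ) (x y : V) :
    wDist G w x y = wDist G w y x := by
  have key : ∀ a b : V, wDist G w a b ≤ wDist G w b a := by
    intro a b
    refine le_iInf fun q => ?_
    refine iInf_le_of_le ⟨q.1.reverse, q.2.reverse⟩ ?_
    simp [walkLen, List.sum_reverse]
  exact le_antisymm (key x y) (key y x)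

/-- The power graph: two distinct vertices are adjacent iff their weighted distance
is at most `r`. -/
noncomputable def powerGraph {V : Type} (G : SimpleGraph V) (w : Sym2 V → ℝ) (r : ℝ) :
    SimpleGraph V where
  Adj x y := x ≠ y ∧ wDist G w x y ≤ ENNReal.ofReal r
  symm := ⟨by
    rintro x y ⟨hne, hle⟩
    exact ⟨hne.symm, by rwa [wDist_comm]⟩⟩
  loopless := ⟨fun x h => h.1 rfl⟩

/-- The unit-length (hop) distance in an unweighted graph. -/
noncomputable def hopDist {V : Type} (L : SimpleGraph V) (x y : V) : ℝ≥0∞ :=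
  ⨅ q : L.Walk x y, (q.length : ℝ≥0∞)

/-- Same-colour adjacency within a vertex set `A`. -/
def colorGraph {V : Type} (K : SimpleGraph V) (A : Set V) {m : ℕ} (c : V → Fin m) :
    SimpleGraph V where
  Adj x y := K.Adj x y ∧ x ∈ A ∧ y ∈ A ∧ c x = c y
  symm := ⟨by
    rintro x y ⟨h, hx, hy, hc⟩
    exact ⟨h.symm, hy, hx, hc.symm⟩⟩
  loopless := ⟨fun x h => K.loopless.irrefl x h.1⟩

/-- The colouring `c` of the subgraph of `K` induced on `A` has weak diameter, measured by the
hop distance of `L`, at most `N`: any two vertices of a monochromatic component of `K ↾ A` are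
at hop distance at most `N` in `L`. -/
def HasWeakDiamLE {V : Type} (K : SimpleGraph V) (A : Set V) (L : SimpleGraph V) {m : ℕ}
    (c : V → Fin m) (N : ℝ) : Prop :=
  ∀ x ∈ A, ∀ y ∈ A, (colorGraph K A c).Reachable x y → hopDist L x y ≤ ENNReal.ofReal N

/-- `nbhd G w r S`: vertices joined to `S` by a path of weighted length at most `r`. -/
def nbhd {V : Type} (G : SimpleGraph V) (w : Sym2 V → ℝ) (r : ℝ) (S : Set V) : Set V :=
  {v | ∃ s ∈ S, ∃ q : G.Walk v s, q.IsPath ∧ walkLen w q ≤ r}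

/-- Deleting a set of vertices (keeping them as isolated vertices of the ambient type). -/
def delVerts {V : Type} (G : SimpleGraph V) (Z : Set V) : SimpleGraph V where
  Adj x y := G.Adj x y ∧ x ∉ Z ∧ y ∉ Z
  symm := ⟨by
    rintro x y ⟨h, hx, hy⟩
    exact ⟨h.symm, hy, hx⟩⟩
  loopless := ⟨fun x h => G.loopless.irrefl x h.1⟩

/-- A weighted graph: a finite simple graph together with positive edge weights. -/
structure WGraph : Type 1 where
  V : Type
  fin : Finite V
  G : SimpleGraph V
  w : Sym2 V → ℝ
  pos : ∀ e ∈ G.edgeSet, 0 < w e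

/-- The extended metric on the vertex set of a weighted graph. -/
noncomputable def WGraph.dist (W : WGraph) : W.V → W.V → ℝ≥0∞ := wDist W.G W.w

/-- All edge weights lie in `(0, ℓ]`. -/
def WGraph.IsBounded (W : WGraph) (ℓ : ℝ) : Prop := ∀ e ∈ W.G.edgeSet, W.w e ≤ ℓ

/-- `f` is an `n`-dimensional control function for the extended metric `d`. -/
def IsControlOn {X : Type} (d : X → X → ℝ≥0∞) (n : ℕ) (f : ℝ → ℝ) : Prop :=
  ∀ r : ℝ, 0 < r → ∃ U : Fin (n + 1) → Set (Set X),
    (∀ x : X, ∃ i, ∃ s ∈ U i, x ∈ s) ∧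
    (∀ i, ∀ s ∈ U i, ∀ t ∈ U i, s ≠ t → ∀ x ∈ s, ∀ y ∈ t, ENNReal.ofReal r < d x y) ∧
    (∀ i, ∀ s ∈ U i, ∀ x ∈ s, ∀ y ∈ s, d x y ≤ ENNReal.ofReal (f r))

/-- The asymptotic dimension of a class of weighted graphs is at most `n`. -/
def asdimLE (F : Set WGraph) (n : ℕ) : Prop :=
  ∃ f : ℝ → ℝ, (∀ x, 0 < x → 0 < f x) ∧ ∀ W ∈ F, IsControlOn W.dist n f

/-- The Assouad–Nagata dimension of a class of weighted graphs is at most `n`: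
some dilation is a common `n`-dimensional control function. -/
def ANdimLE (F : Set WGraph) (n : ℕ) : Prop :=
  ∃ (f : ℝ → ℝ) (c : ℝ), 0 < c ∧ (∀ x, 0 < x → 0 < f x) ∧ (∀ x, 0 < x → f x ≤ c * x) ∧
    ∀ W ∈ F, IsControlOn W.dist n f

/-- `H` is a minor of `G`: there are pairwise disjoint nonempty connected branch sets in `G`,
one for each vertex of `H`, with branch sets of adjacent vertices joined by an edge. -/
def IsMinorOf {α β : Type} (H : SimpleGraph β) (G : SimpleGraph α) : Prop :=
  ∃ B : β → Set α,
    (∀ h, (B h).Nonempty) ∧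
    (∀ h h', h ≠ h' → Disjoint (B h) (B h')) ∧
    (∀ h, (G.induce (B h)).Connected) ∧
    (∀ h h', H.Adj h h' → ∃ a ∈ B h, ∃ b ∈ B h', G.Adj a b)
/-- A class `F` of `(0,ℓ]`-bounded weighted graphs is `(m,ℓ,N)`-nice: for every `(G,φ) ∈ F`,
`(G,φ)^ℓ` is `m`-colourable with weak diameter in `(G,φ)^ℓ` at most `N`. -/
def IsNice (F : Set WGraph) (m : ℕ) (ℓ N : ℝ) : Prop :=
  ∀ W ∈ F, ∃ c : W.V → Fin m,
    HasWeakDiamLE (powerGraph W.G W.w ℓ) Set.univ (powerGraph W.G W.w ℓ) c N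

/-- The weighted graph `(G,φ) − Z` obtained by deleting the vertices of `Z`. -/
noncomputable def WGraph.delete (W : WGraph) (Z : Set W.V) : WGraph where
  V := ↥(Zᶜ)
  fin := by
    haveI := W.fin
    exact Subtype.finite
  G := W.G.induce Zᶜ
  w := fun e => W.w (e.map Subtype.val)
  pos := by
    intro e
    induction e using Sym2.ind with
    | _ a b =>
      intro he
      show 0 < W.w (Sym2.map Subtype.val s(a, b))
      rw [Sym2.map_pair_eq]
      exact W.pos _ (by simpa using he)

/-- The class `F^{+n,(0,ℓ]}`: all `(0,ℓ]`-bounded weighted graphs `(G,φ)` for which there is a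
set `Z` of at most `n` vertices with `(G,φ) − Z ∈ F`. -/
noncomputable def apexClass (F : Set WGraph) (n : ℕ) (ℓ : ℝ) : Set WGraph :=
  {W : WGraph | W.IsBounded ℓ ∧ ∃ Z : Set W.V, Z.ncard ≤ n ∧ W.delete Z ∈ F}

/-! ### Auxiliary lemmas for `apex_extension` -/

section ApexAux

open SimpleGraph

lemma walkLen_nonneg {V : Type} {G : SimpleGraph V} {w : Sym2 V → ℝ}
    (hw : ∀ e ∈ G.edgeSet, 0 ≤ w e) {x y : V} (q : G.Walk x y) : 0 ≤ walkLen w q := by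
  apply List.sum_nonneg
  intro a ha
  obtain ⟨e, he, rfl⟩ := List.mem_map.mp ha
  exact hw e (q.edges_subset_edgeSet he)

lemma walkLen_append {V : Type} {G : SimpleGraph V} {w : Sym2 V → ℝ} {x y z : V}
    (p : G.Walk x y) (q : G.Walk y z) :
    walkLen w (p.append q) = walkLen w p + walkLen w q := by
  simp [walkLen, SimpleGraph.Walk.edges_append]

lemma wDist_le_of_path {V : Type} {G : SimpleGraph V} {w : Sym2 V → ℝ} {x y : V}
    {q : G.Walk x y} (hq : q.IsPath) {r : ℝ} (h : walkLen w q ≤ r) :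
    wDist G w x y ≤ ENNReal.ofReal r :=
  iInf_le_of_le ⟨q, hq⟩ (ENNReal.ofReal_le_ofReal h)

lemma exists_path_of_wDist_le {V : Type} [Finite V] {G : SimpleGraph V} {w : Sym2 V → ℝ}
    (_hw : ∀ e ∈ G.edgeSet, 0 ≤ w e) {x y : V} {r : ℝ} (hr : 0 ≤ r)
    (h : wDist G w x y ≤ ENNReal.ofReal r) :
    ∃ q : G.Walk x y, q.IsPath ∧ walkLen w q ≤ r := by
  classical
  haveI : Fintype V := Fintype.ofFinite V
  haveI : DecidableRel G.Adj := Classical.decRel _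
  haveI : Fintype {q : G.Walk x y // q.IsPath} := SimpleGraph.Path.instFintype G
  haveI hne : Nonempty {q : G.Walk x y // q.IsPath} := by
    by_contra hne
    rw [not_nonempty_iff] at hne
    rw [wDist, iInf_of_empty] at h
    exact (ENNReal.ofReal_ne_top (r := r)) (top_le_iff.mp h)
  have hmem := Set.Nonempty.csInf_mem
    (Set.range_nonempty (fun q : {q : G.Walk x y // q.IsPath} =>
      ENNReal.ofReal (walkLen w q.1))) (Set.finite_range _)
  rw [sInf_range] at hmem
  obtain ⟨q, hq⟩ := hmem
  refine ⟨q.1, q.2, ?_⟩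
  rw [wDist] at h
  rw [← hq] at h
  exact (ENNReal.ofReal_le_ofReal_iff hr).mp h

lemma hopDist_le_length {V : Type} {L : SimpleGraph V} {x y : V} (q : L.Walk x y) :
    hopDist L x y ≤ (q.length : ℝ≥0∞) :=
  iInf_le _ q

lemma hopDist_triangle {V : Type} (L : SimpleGraph V) (x y z : V) :
    hopDist L x z ≤ hopDist L x y + hopDist L y z := by
  rcases isEmpty_or_nonempty (L.Walk x y) with hxy | hxy
  · rw [show hopDist L x y = ⊤ from iInf_of_empty _]
    simp
  rcases isEmpty_or_nonempty (L.Walk y z) with hyz | hyz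
  · rw [show hopDist L y z = ⊤ from iInf_of_empty _]
    simp
  have h1 : hopDist L x y + hopDist L y z
      = ⨅ p : L.Walk x y, ⨅ q : L.Walk y z, ((p.length : ℝ≥0∞) + (q.length : ℝ≥0∞)) := by
    rw [hopDist, hopDist, ENNReal.iInf_add]
    exact iInf_congr fun p => ENNReal.add_iInf
  rw [h1]
  refine le_iInf fun p => le_iInf fun q => ?_
  refine le_trans (hopDist_le_length (p.append q)) ?_
  simp [SimpleGraph.Walk.length_append]

lemma hopDist_le_one_of_adj {V : Type} {L : SimpleGraph V} {x y : V} (h : L.Adj x y) :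
    hopDist L x y ≤ 1 := by
  refine le_trans (hopDist_le_length (SimpleGraph.Walk.cons h SimpleGraph.Walk.nil)) ?_
  simp

lemma hopDist_self_le {V : Type} (L : SimpleGraph V) (x : V) {b : ℝ≥0∞} :
    hopDist L x x ≤ b := by
  refine le_trans (hopDist_le_length SimpleGraph.Walk.nil) ?_
  simp

lemma hopDist_mono_hom {V V' : Type} {L : SimpleGraph V} {L' : SimpleGraph V'}
    (f : L →g L') (x y : V) : hopDist L' (f x) (f y) ≤ hopDist L x y := by
  refine le_iInf fun q => ?_
  refine le_trans (hopDist_le_length (q.map f)) ?_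
  simp

/-- The inclusion homomorphism from an induced subgraph. -/
def induceHomVal {V : Type} (G : SimpleGraph V) (s : Set V) : G.induce s →g G where
  toFun := Subtype.val
  map_rel' := fun h => h

lemma walkLen_map_val {V : Type} {G : SimpleGraph V} {s : Set V} (w : Sym2 V → ℝ)
    {a b : ↥s} (q : (G.induce s).Walk a b) :
    walkLen w (q.map (induceHomVal G s)) = walkLen (fun e => w (e.map Subtype.val)) q := by
  rw [walkLen, SimpleGraph.Walk.edges_map, List.map_map, walkLen]
  rfl

lemma wDist_le_wDist_induce {V : Type} {G : SimpleGraph V} {w : Sym2 V → ℝ} {s : Set V}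
    (a b : ↥s) :
    wDist G w a.1 b.1 ≤ wDist (G.induce s) (fun e => w (e.map Subtype.val)) a b := by
  refine le_iInf fun q => ?_
  refine iInf_le_of_le ⟨q.1.map (induceHomVal G s),
    SimpleGraph.Walk.map_isPath_of_injective Subtype.val_injective q.2⟩ ?_
  exact le_of_eq (congrArg ENNReal.ofReal (walkLen_map_val w q.1))

lemma exists_lift_walk {V : Type} {G : SimpleGraph V} {s : Set V} :
    ∀ {u v : V} (q : G.Walk u v) (hs : ∀ a ∈ q.support, a ∈ s),
    ∃ q' : (G.induce s).Walk ⟨u, hs u q.start_mem_support⟩ ⟨v, hs v q.end_mem_support⟩,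
      q'.map (induceHomVal G s) = q := by
  intro u v q
  induction q with
  | nil =>
    intro hs
    exact ⟨SimpleGraph.Walk.nil, rfl⟩
  | @cons u b v h p ih =>
    intro hs
    have hb : b ∈ s := hs b (by simp)
    obtain ⟨p', hp'⟩ := ih (fun a ha => hs a (by simp [ha]))
    refine ⟨SimpleGraph.Walk.cons (show (G.induce s).Adj ⟨u, _⟩ ⟨b, hb⟩ from h) p', ?_⟩
    rw [SimpleGraph.Walk.map_cons, hp']
    rfl

/-- A monochromatic chain: a sequence of vertices of the same colour, consecutive ones joined
by a path of weighted length at most `ℓ` avoiding the set `T`. -/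
inductive ChainW {V : Type} (G : SimpleGraph V) (w : Sym2 V → ℝ) (ℓ : ℝ) {m : ℕ}
    (c : V → Fin m) (T : Set V) : V → V → Prop
  | nil (x : V) : ChainW G w ℓ c T x x
  | cons {x y z : V} (hc : c x = c y) (q : G.Walk x y) (hq : q.IsPath)
      (hlen : walkLen w q ≤ ℓ) (hT : ∀ a ∈ q.support, a ∉ T) (h : ChainW G w ℓ c T y z) :
      ChainW G w ℓ c T x z

lemma ChainW.split {V : Type} {G : SimpleGraph V} {w : Sym2 V → ℝ} {ℓ : ℝ} {m : ℕ}
    {c : V → Fin m} {T : Set V} (hw : ∀ e ∈ G.edgeSet, 0 ≤ w e) (z : V) {x y : V}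
    (h : ChainW G w ℓ c T x y) :
    ChainW G w ℓ c (T ∪ {z}) x y ∨
    ∃ u v : V, ChainW G w ℓ c (T ∪ {z}) x u ∧ wDist G w u z ≤ ENNReal.ofReal ℓ ∧
      wDist G w z v ≤ ENNReal.ofReal ℓ ∧ ChainW G w ℓ c (T ∪ {z}) v y := by
  classical
  induction h with
  | nil x => exact Or.inl (ChainW.nil x)
  | @cons x y₁ y hc q hq hlen hT h ih =>
    by_cases hz : z ∈ q.support
    · -- split the path `q` at `z`
      have hlen_eq : walkLen w (q.takeUntil z hz) + walkLen w (q.dropUntil z hz)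
          = walkLen w q := by
        conv_rhs => rw [← q.take_spec hz]
        exact (walkLen_append _ _).symm
      have h1 : walkLen w (q.takeUntil z hz) ≤ ℓ := by
        have := walkLen_nonneg hw (q.dropUntil z hz)
        linarith
      have h2 : walkLen w (q.dropUntil z hz) ≤ ℓ := by
        have := walkLen_nonneg hw (q.takeUntil z hz)
        linarith
      have hxz : wDist G w x z ≤ ENNReal.ofReal ℓ := wDist_le_of_path (hq.takeUntil hz) h1
      have hzy₁ : wDist G w z y₁ ≤ ENNReal.ofReal ℓ := wDist_le_of_path (hq.dropUntil hz) h2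
      rcases ih with ih | ⟨u, v, _pre, _d1, d2, suf⟩
      · exact Or.inr ⟨x, y₁, ChainW.nil x, hxz, hzy₁, ih⟩
      · exact Or.inr ⟨x, v, ChainW.nil x, hxz, d2, suf⟩
    · have hT' : ∀ a ∈ q.support, a ∉ T ∪ {z} := by
        intro a ha
        simp only [Set.mem_union, Set.mem_singleton_iff]
        rintro (haT | rfl)
        · exact hT a ha haT
        · exact hz ha
      rcases ih with ih | ⟨u, v, pre, d1, d2, suf⟩
      · exact Or.inl (ChainW.cons hc q hq hlen hT' ih)
      · exact Or.inr ⟨u, v, ChainW.cons hc q hq hlen hT' pre, d1, d2, suf⟩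

end ApexAux

/-- Theorem (Lemma `apex_extension`): if `F` is an `(m,ℓ,N)`-nice class of `(0,ℓ]`-bounded
weighted graphs, then `F^{+n,(0,ℓ]}` is an `(m,ℓ,N*)`-nice class of `(0,ℓ]`-bounded weighted
graphs, where `N*` depends only on `ℓ`, `N` and `n`. -/
theorem apex_extension (ℓ N : ℝ) (hℓ : 0 < ℓ) (hN : 0 < N) (n : ℕ) :
    ∃ Nstar : ℝ, ∀ m : ℕ, 0 < m → ∀ F : Set WGraph,
      (∀ W ∈ F, W.IsBounded ℓ) → IsNice F m ℓ N →
        IsNice (apexClass F n ℓ) m ℓ Nstar := by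
  classical
  set g : ℕ → ℝ := fun k => Nat.rec N (fun _ a => 2 * a + 2) k with hgdef
  have g0 : g 0 = N := rfl
  have gsucc : ∀ k, g (k + 1) = 2 * g k + 2 := fun k => rfl
  have gpos : ∀ k, 0 < g k := by
    intro k
    induction k with
    | zero => rw [g0]; exact hN
    | succ k ih => rw [gsucc]; linarith
  have hNg : ∀ k, N ≤ g k := by
    intro k
    induction k with
    | zero => rw [g0]
    | succ k ih => rw [gsucc]; linarith [gpos k]
  have gmono : ∀ k, g k ≤ g (k + 1) := fun k => by rw [gsucc]; linarith [gpos k]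
  refine ⟨g n, ?_⟩
  intro m hm F hF hnice W hW
  obtain ⟨hB, Z, hZ, hmem⟩ := hW
  haveI := W.fin
  obtain ⟨c', hc'⟩ := hnice _ hmem
  have hw : ∀ e ∈ W.G.edgeSet, 0 ≤ W.w e := fun e he => (W.pos e he).le
  set K := powerGraph W.G W.w ℓ with hK
  set PD := powerGraph (W.delete Z).G (W.delete Z).w ℓ with hPD
  set c : W.V → Fin m := fun v => if h : v ∈ Zᶜ then c' ⟨v, h⟩ else ⟨0, hm⟩ with hcdef
  -- the inclusion homomorphism PD →g K
  have hadjPK : ∀ {a b : ↥(Zᶜ : Set W.V)}, PD.Adj a b → K.Adj a.1 b.1 := by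
    intro a b hab
    obtain ⟨hne, hd⟩ := hab
    refine ⟨fun hval => hne (Subtype.val_injective hval), ?_⟩
    exact le_trans (wDist_le_wDist_induce a b) hd
  let f : PD →g K := ⟨Subtype.val, fun h => hadjPK h⟩
  -- base case: chains avoiding all of Z
  have base : ∀ T : Set W.V, Z ⊆ T → ∀ x y : W.V,
      ChainW W.G W.w ℓ c T x y → hopDist K x y ≤ ENNReal.ofReal N := by
    intro T hZT x y hch
    have key : ∀ {x y : W.V}, ChainW W.G W.w ℓ c T x y →
        x = y ∨ ∃ (hx : x ∈ (Zᶜ : Set W.V)) (hy : y ∈ (Zᶜ : Set W.V)),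
          (colorGraph PD Set.univ c').Reachable ⟨x, hx⟩ ⟨y, hy⟩ := by
      intro x y hch
      induction hch with
      | nil x => exact Or.inl rfl
      | @cons x y₁ y hcol q hq hlen hT h ih =>
        have hx : x ∈ (Zᶜ : Set W.V) := fun hxZ => hT x q.start_mem_support (hZT hxZ)
        have hy₁ : y₁ ∈ (Zᶜ : Set W.V) := fun hZ' => hT y₁ q.end_mem_support (hZT hZ')
        by_cases hxy : x = y₁
        · subst hxy; exact ih
        · have hs : ∀ a ∈ q.support, a ∈ (Zᶜ : Set W.V) :=
            fun a ha haZ => hT a ha (hZT haZ)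
          obtain ⟨q', hq'⟩ := exists_lift_walk q hs
          have hq'path : q'.IsPath := by
            apply SimpleGraph.Walk.IsPath.of_map (f := induceHomVal W.G Zᶜ)
            rw [hq']; exact hq
          have hq'len : walkLen (W.delete Z).w q' ≤ ℓ := by
            have hmap := walkLen_map_val W.w q'
            rw [hq'] at hmap
            show walkLen (fun e => W.w (e.map Subtype.val)) q' ≤ ℓ
            rw [← hmap]; exact hlen
          have hadj : (colorGraph PD Set.univ c').Adj ⟨x, hx⟩ ⟨y₁, hy₁⟩ := by
            refine ⟨⟨?_, ?_⟩, trivial, trivial, ?_⟩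
            · exact fun hh => hxy (congrArg Subtype.val hh)
            · exact wDist_le_of_path hq'path hq'len
            · have h1 : c x = c' ⟨x, hx⟩ := dif_pos hx
              have h2 : c y₁ = c' ⟨y₁, hy₁⟩ := dif_pos hy₁
              rw [← h1, ← h2]; exact hcol
          rcases ih with rfl | ⟨hy₁', hy, hr⟩
          · exact Or.inr ⟨hx, hy₁, hadj.reachable⟩
          · exact Or.inr ⟨hx, hy, hadj.reachable.trans hr⟩
    rcases key hch with rfl | ⟨hx, hy, hr⟩
    · exact hopDist_self_le K x
    · have hhop := hc' ⟨x, hx⟩ trivial ⟨y, hy⟩ trivial hr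
      exact le_trans (hopDist_mono_hom f ⟨x, hx⟩ ⟨y, hy⟩) hhop
  -- main induction on the number of remaining apex vertices
  have main : ∀ k : ℕ, ∀ T : Set W.V, (Z \ T).ncard ≤ k → ∀ x y : W.V,
      ChainW W.G W.w ℓ c T x y → hopDist K x y ≤ ENNReal.ofReal (g k) := by
    intro k
    induction k with
    | zero =>
      intro T hT x y hch
      have hZT : Z ⊆ T := by
        have h1 : (Z \ T).ncard = 0 := Nat.le_zero.mp hT
        have h2 := (Set.ncard_eq_zero (Set.toFinite _)).mp h1
        exact Set.diff_eq_empty.mp h2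
      rw [g0]
      exact base T hZT x y hch
    | succ k ih =>
      intro T hT x y hch
      rcases Set.eq_empty_or_nonempty (Z \ T) with he | ⟨z, hz⟩
      · refine le_trans (base T (Set.diff_eq_empty.mp he) x y hch) ?_
        exact ENNReal.ofReal_le_ofReal (hNg (k + 1))
      · have hcard : (Z \ (T ∪ {z})).ncard ≤ k := by
          rw [← Set.diff_diff]
          have := Set.ncard_diff_singleton_lt_of_mem hz (Set.toFinite _)
          omega
        rcases hch.split hw z with h1 | ⟨u, v, pre, d1, d2, suf⟩
        · exact le_trans (ih (T ∪ {z}) hcard x y h1) (ENNReal.ofReal_le_ofReal (gmono k))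
        · have hxu : hopDist K x u ≤ ENNReal.ofReal (g k) := ih _ hcard _ _ pre
          have hvy : hopDist K v y ≤ ENNReal.ofReal (g k) := ih _ hcard _ _ suf
          have huz : hopDist K u z ≤ 1 := by
            by_cases huz : u = z
            · subst huz; exact hopDist_self_le K u
            · exact hopDist_le_one_of_adj ⟨huz, d1⟩
          have hzv : hopDist K z v ≤ 1 := by
            by_cases hzv : z = v
            · subst hzv; exact hopDist_self_le K z
            · exact hopDist_le_one_of_adj ⟨hzv, d2⟩
          calc hopDist K x y ≤ hopDist K x u + hopDist K u y := hopDist_triangle K x u y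
            _ ≤ hopDist K x u + (hopDist K u z + hopDist K z y) :=
                add_le_add le_rfl (hopDist_triangle K u z y)
            _ ≤ hopDist K x u + (hopDist K u z + (hopDist K z v + hopDist K v y)) :=
                add_le_add le_rfl (add_le_add le_rfl (hopDist_triangle K z v y))
            _ ≤ ENNReal.ofReal (g k) + (1 + (1 + ENNReal.ofReal (g k))) :=
                add_le_add hxu (add_le_add huz (add_le_add hzv hvy))
            _ = ENNReal.ofReal (g (k + 1)) := by
                rw [gsucc, show (2 : ℝ) * g k + 2 = g k + (1 + (1 + g k)) by ring]
                have h0 : (0 : ℝ) ≤ g k := (gpos k).le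
                rw [ENNReal.ofReal_add h0 (by linarith),
                  ENNReal.ofReal_add (by norm_num : (0:ℝ) ≤ 1) (by linarith),
                  ENNReal.ofReal_add (by norm_num : (0:ℝ) ≤ 1) h0, ENNReal.ofReal_one]
  -- convert monochromatic reachability into chains
  have toChain : ∀ {x y : W.V}, (colorGraph K Set.univ c).Walk x y →
      ChainW W.G W.w ℓ c ∅ x y := by
    intro x y p
    induction p with
    | nil => exact ChainW.nil _
    | cons h p ih =>
      obtain ⟨⟨hne, hd⟩, -, -, hcol⟩ := h
      obtain ⟨q, hq, hlen⟩ := exists_path_of_wDist_le hw hℓ.le hd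
      exact ChainW.cons hcol q hq hlen (by simp) ih
  refine ⟨c, ?_⟩
  intro x _ y _ hreach
  obtain ⟨p⟩ := hreach
  exact main n ∅ (by simpa using hZ) x y (toChain p)
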